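/- Let A be the 4-dimensional commutative ℂ-algebra with basis e₁, e₂, e₃, e₄ and nonzero products e₁e₁ = e₂ and e₂e₂ = e₃ (all other products of basis vectors are zero). Then a symmetric bilinear form θ : A × A → ℂ belongs to B²(A, ℂ) if and only if θ(eᵢ, eⱼ) = 0 for all pairs (i, j) with i ≤ j other than (1,1) and (2,2). Consequently H²(A, ℂ) = Z²(A, ℂ)/B²(A, ℂ) has dimension 8. -/

import Mathlib

noncomputable section

open scoped Matrix

/-- The multiplication of the 4-dimensional commutative algebra with
`e₁e₁ = e₂`, `e₂e₂ = e₃` (all other products of basis vectors zero),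
on the carrier `Fin 4 → ℂ`. -/
def mulB (u v : Fin 4 → ℂ) : Fin 4 → ℂ :=
  ![0, u 0 * v 0, u 1 * v 1, 0]


-- basis vectors
private def E0 : Fin 4 → ℂ := ![1,0,0,0]
private def E1 : Fin 4 → ℂ := ![0,1,0,0]
private def E2 : Fin 4 → ℂ := ![0,0,1,0]
private def E3 : Fin 4 → ℂ := ![0,0,0,1]

lemma decomp (w : Fin 4 → ℂ) : w = w 0 • E0 + w 1 • E1 + w 2 • E2 + w 3 • E3 := by
  funext i; fin_cases i <;> simp [E0, E1, E2, E3]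

lemma zero4 : (![0,0,0,0] : Fin 4 → ℂ) = 0 := by
  funext i; fin_cases i <;> rfl

lemma core (θ : (Fin 4 → ℂ) →ₗ[ℂ] (Fin 4 → ℂ) →ₗ[ℂ] ℂ) (hsym : ∀ u v, θ u v = θ v u) :
    ((∃ f : (Fin 4 → ℂ) →ₗ[ℂ] ℂ, ∀ u v, θ u v = f (mulB u v)) ↔
      (θ ![1,0,0,0] ![0,1,0,0] = 0 ∧ θ ![1,0,0,0] ![0,0,1,0] = 0 ∧
       θ ![1,0,0,0] ![0,0,0,1] = 0 ∧ θ ![0,1,0,0] ![0,0,1,0] = 0 ∧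
       θ ![0,1,0,0] ![0,0,0,1] = 0 ∧ θ ![0,0,1,0] ![0,0,1,0] = 0 ∧
       θ ![0,0,1,0] ![0,0,0,1] = 0 ∧ θ ![0,0,0,1] ![0,0,0,1] = 0)) := by
  constructor
  · rintro ⟨f, hf⟩
    refine ⟨?_, ?_, ?_, ?_, ?_, ?_, ?_, ?_⟩ <;>
      · rw [hf]
        have : ∀ u v : Fin 4 → ℂ, u 0 * v 0 = 0 → u 1 * v 1 = 0 → mulB u v = 0 := by
          intro u v h1 h2; funext i; fin_cases i <;> simp [mulB, h1, h2]
        rw [this _ _ (by norm_num) (by norm_num), map_zero]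
  · rintro ⟨h1, h2, h3, h4, h5, h6, h7, h8⟩
    refine ⟨(θ E0 E0) • (LinearMap.proj 1) + (θ E1 E1) • (LinearMap.proj 2), fun u v => ?_⟩
    have h1' : θ E1 E0 = 0 := by rw [hsym]; exact h1
    have h2' : θ E2 E0 = 0 := by rw [hsym]; exact h2
    have h3' : θ E3 E0 = 0 := by rw [hsym]; exact h3
    have h4' : θ E2 E1 = 0 := by rw [hsym]; exact h4
    have h5' : θ E3 E1 = 0 := by rw [hsym]; exact h5
    have h7' : θ E3 E2 = 0 := by rw [hsym]; exact h7
    have expand : θ u v =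
        (u 0 * v 0) * θ E0 E0 + (u 0 * v 1) * θ E0 E1 + (u 0 * v 2) * θ E0 E2 +
        (u 0 * v 3) * θ E0 E3 + (u 1 * v 0) * θ E1 E0 + (u 1 * v 1) * θ E1 E1 +
        (u 1 * v 2) * θ E1 E2 + (u 1 * v 3) * θ E1 E3 + (u 2 * v 0) * θ E2 E0 +
        (u 2 * v 1) * θ E2 E1 + (u 2 * v 2) * θ E2 E2 + (u 2 * v 3) * θ E2 E3 +
        (u 3 * v 0) * θ E3 E0 + (u 3 * v 1) * θ E3 E1 + (u 3 * v 2) * θ E3 E2 +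
        (u 3 * v 3) * θ E3 E3 := by
      conv_lhs => rw [decomp u, decomp v]
      simp only [map_add, map_smul, LinearMap.add_apply, LinearMap.smul_apply, smul_eq_mul]
      ring
    rw [expand]
    show _ = θ E0 E0 * mulB u v 1 + θ E1 E1 * mulB u v 2
    have hE : θ E0 E1 = 0 ∧ θ E0 E2 = 0 ∧ θ E0 E3 = 0 ∧ θ E1 E2 = 0 ∧ θ E1 E3 = 0 ∧
        θ E2 E2 = 0 ∧ θ E2 E3 = 0 ∧ θ E3 E3 = 0 := ⟨h1, h2, h3, h4, h5, h6, h7, h8⟩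
    obtain ⟨g1, g2, g3, g4, g5, g6, g7, g8⟩ := hE
    simp only [mulB, Matrix.cons_val_zero, Matrix.cons_val_one, Matrix.head_cons, Matrix.cons_val_two, Matrix.tail_cons,
      g1, g2, g3, g4, g5, g6, g7, g8, h1', h2', h3', h4', h5', h7']
    ring
/-- `Z²(A, ℂ)`, the space of symmetric bilinear forms on `A`, realized as the space of
symmetric `4 × 4` matrices (the Gram matrix of a form; the form attached to a matrix `M`
is `(u, v) ↦ u ⬝ᵥ M *ᵥ v`). -/
def Z2 : Submodule ℂ (Matrix (Fin 4) (Fin 4) ℂ) where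
  carrier := {M | ∀ i j, M i j = M j i}
  add_mem' := by
    intro a b ha hb i j
    simp [Matrix.add_apply, ha i j, hb i j]
  zero_mem' := by intro i j; simp
  smul_mem' := by
    intro c M hM i j
    simp [Matrix.smul_apply, hM i j]

/-- `B²(A, ℂ)`: the matrices whose associated bilinear form is a coboundary
`δf(u, v) = f (uv)` for a linear functional `f`. -/
def B2 : Submodule ℂ (Matrix (Fin 4) (Fin 4) ℂ) where
  carrier :=
    {M | ∃ f : (Fin 4 → ℂ) →ₗ[ℂ] ℂ, ∀ u v : Fin 4 → ℂ, u ⬝ᵥ M.mulVec v = f (mulB u v)}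
  add_mem' := by
    rintro a b ⟨f, hf⟩ ⟨g, hg⟩
    refine ⟨f + g, fun u v => ?_⟩
    simp [Matrix.add_mulVec, dotProduct_add, hf u v, hg u v]
  zero_mem' := ⟨0, fun u v => by simp [Matrix.zero_mulVec]⟩
  smul_mem' := by
    rintro c M ⟨f, hf⟩
    refine ⟨c • f, fun u v => ?_⟩
    simp [Matrix.smul_mulVec, dotProduct_smul, hf u v]

/-- `B²(A, ℂ)` viewed inside `Z²(A, ℂ)`. -/
def B2' : Submodule ℂ Z2 := B2.comap Z2.subtype

/-- `H²(A, ℂ) = Z²(A, ℂ) / B²(A, ℂ)`. -/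
abbrev H2 := Z2 ⧸ B2'


lemma coreM (M : Matrix (Fin 4) (Fin 4) ℂ) (hM : ∀ i j, M i j = M j i) :
    (∃ f : (Fin 4 → ℂ) →ₗ[ℂ] ℂ, ∀ u v : Fin 4 → ℂ, u ⬝ᵥ M.mulVec v = f (mulB u v)) ↔
      (M 0 1 = 0 ∧ M 0 2 = 0 ∧ M 0 3 = 0 ∧ M 1 2 = 0 ∧
       M 1 3 = 0 ∧ M 2 2 = 0 ∧ M 2 3 = 0 ∧ M 3 3 = 0) := by
  set θ := LinearMap.mk₂ ℂ (fun u v => u ⬝ᵥ M.mulVec v)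
    (fun u u' v => by simp [add_dotProduct])
    (fun c u v => by simp [smul_dotProduct])
    (fun u v v' => by simp [Matrix.mulVec_add, dotProduct_add])
    (fun c u v => by simp [Matrix.mulVec_smul, dotProduct_smul]) with hθ
  have happ : ∀ u v, θ u v = u ⬝ᵥ M.mulVec v := fun u v => rfl
  have hsym : ∀ u v, θ u v = θ v u := by
    intro u v
    rw [happ, happ]
    simp only [Matrix.mulVec, dotProduct, Fin.sum_univ_four]
    rw [hM 0 1, hM 0 2, hM 0 3, hM 1 2, hM 1 3, hM 2 3]
    ring
  have hc := core θ hsym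
  have hiff : (∃ f : (Fin 4 → ℂ) →ₗ[ℂ] ℂ, ∀ u v, θ u v = f (mulB u v)) ↔
      (∃ f : (Fin 4 → ℂ) →ₗ[ℂ] ℂ, ∀ u v : Fin 4 → ℂ, u ⬝ᵥ M.mulVec v = f (mulB u v)) := by
    constructor
    · rintro ⟨f, hf⟩; exact ⟨f, fun u v => by rw [← happ]; exact hf u v⟩
    · rintro ⟨f, hf⟩; exact ⟨f, fun u v => by rw [happ]; exact hf u v⟩
  rw [← hiff, hc]
  simp only [happ]
  simp [dotProduct, Matrix.mulVec, Fin.sum_univ_four]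

def φ : Z2 →ₗ[ℂ] (Fin 8 → ℂ) where
  toFun M := ![M.1 0 1, M.1 0 2, M.1 0 3, M.1 1 2, M.1 1 3, M.1 2 2, M.1 2 3, M.1 3 3]
  map_add' a b := by funext i; fin_cases i <;> rfl
  map_smul' c a := by funext i; fin_cases i <;> rfl

lemma φ_surj : Function.Surjective φ := by
  intro c
  refine ⟨⟨!![0, c 0, c 1, c 2; c 0, 0, c 3, c 4; c 1, c 3, c 5, c 6; c 2, c 4, c 6, c 7],
    by intro i j; fin_cases i <;> fin_cases j <;> rfl⟩, ?_⟩
  funext i; fin_cases i <;> rfl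

lemma ker_φ : LinearMap.ker φ = B2' := by
  ext M
  obtain ⟨M, hM⟩ := M
  simp only [LinearMap.mem_ker, B2', Submodule.mem_comap, Submodule.subtype_apply]
  constructor
  · intro h
    have h' : ∀ i : Fin 8, φ ⟨M, hM⟩ i = 0 := fun i => by rw [h]; rfl
    exact (coreM M hM).mpr ⟨h' 0, h' 1, h' 2, h' 3, h' 4, h' 5, h' 6, h' 7⟩
  · intro h
    obtain ⟨h1, h2, h3, h4, h5, h6, h7, h8⟩ := (coreM M hM).mp h
    funext i; fin_cases i <;> [exact h1; exact h2; exact h3; exact h4; exact h5; exact h6; exact h7; exact h8]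

/-- For the algebra `e₁e₁ = e₂, e₂e₂ = e₃` (on basis `e₁, e₂, e₃, e₄`): a symmetric
bilinear form `θ` belongs to `B²(A, ℂ)` iff `θ(eᵢ, eⱼ) = 0` for every pair `i ≤ j` other
than `(1,1)` and `(2,2)`; consequently `H²(A, ℂ) = Z²(A, ℂ)/B²(A, ℂ)` has dimension `8`. -/
theorem stmt15 :
    (∀ θ : (Fin 4 → ℂ) →ₗ[ℂ] (Fin 4 → ℂ) →ₗ[ℂ] ℂ, (∀ u v, θ u v = θ v u) →
      ((∃ f : (Fin 4 → ℂ) →ₗ[ℂ] ℂ, ∀ u v, θ u v = f (mulB u v)) ↔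
        (θ ![1,0,0,0] ![0,1,0,0] = 0 ∧ θ ![1,0,0,0] ![0,0,1,0] = 0 ∧
         θ ![1,0,0,0] ![0,0,0,1] = 0 ∧ θ ![0,1,0,0] ![0,0,1,0] = 0 ∧
         θ ![0,1,0,0] ![0,0,0,1] = 0 ∧ θ ![0,0,1,0] ![0,0,1,0] = 0 ∧
         θ ![0,0,1,0] ![0,0,0,1] = 0 ∧ θ ![0,0,0,1] ![0,0,0,1] = 0))) ∧
    Module.finrank ℂ H2 = 8 := by
  refine ⟨core, ?_⟩
  have eqv : H2 ≃ₗ[ℂ] (Fin 8 → ℂ) :=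
    (Submodule.quotEquivOfEq B2' (LinearMap.ker φ) ker_φ.symm).trans
      (φ.quotKerEquivOfSurjective φ_surj)
  rw [eqv.finrank_eq]
  simp
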